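/- Let H be a finite simple graph, v a non-isolated vertex of H, and G = Tr(H,v) with new vertices a, b, c. For each i ≥ 0, the number of independent sets F of G with |F| = i and F ∩ {a,b,c} = {c} equals a_{i−1}(H_v) + a_{i−2}(H_v), where a_j(H_v) is the number of independent sets of H_v of size j (a_j = 0 for j < 0). Specifically, such F with v ∈ F correspond bijectively to independent sets of H_v of size i − 2, and such F with v ∉ F correspond bijectively to independent sets of H_v of size i − 1. -/

import Mathlib

open scoped Classical

/-- A finset of vertices is independent if no two of its members are adjacent. -/
def IsIndep {W : Type*} (G : SimpleGraph W) (s : Finset W) : Prop :=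
  ∀ x ∈ s, ∀ y ∈ s, ¬ G.Adj x y

/-- A maximal independent set: independent and not properly contained in another
independent set. -/
def IsMaxIndep {W : Type*} (G : SimpleGraph W) (s : Finset W) : Prop :=
  IsIndep G s ∧ ∀ t : Finset W, IsIndep G t → s ⊆ t → t = s

/-- The independence number `α(G)`: the maximum size of an independent set. -/
noncomputable def indepNum {W : Type*} (G : SimpleGraph W) [Fintype W] : ℕ :=
  sSup {n | ∃ s : Finset W, IsIndep G s ∧ s.card = n}

/-- Trung's construction `Tr(H, v)`: three new vertices `a = Sum.inr 0`, `b = Sum.inr 1`,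
`c = Sum.inr 2` are added to `H`; `c` is joined to `b` and to every neighbor of `v`,
`b` is joined to `a`, and `a` is joined to `v`. -/
def Tr {V : Type*} (H : SimpleGraph V) (v : V) : SimpleGraph (V ⊕ Fin 3) :=
  SimpleGraph.fromRel (fun x y =>
    match x, y with
    | Sum.inl x, Sum.inl y => H.Adj x y
    | Sum.inl x, Sum.inr i => (i = 0 ∧ x = v) ∨ (i = 2 ∧ H.Adj x v)
    | Sum.inr i, Sum.inr j => (i = 0 ∧ j = 1) ∨ (i = 1 ∧ j = 2)
    | _, _ => False)

/-- The set of vertices remaining after deleting the closed neighborhood `N[F]`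
of a set `F` of vertices. -/
def offNbhd {V : Type*} (G : SimpleGraph V) (F : Set V) : Set V :=
  {w | w ∉ F ∧ ∀ u ∈ F, ¬ G.Adj u w}

/-- `G_F`: the induced subgraph of `G` on `V(G) \ N[F]`. -/
def delNbhd {V : Type*} (G : SimpleGraph V) (F : Set V) : SimpleGraph (offNbhd G F) :=
  G.induce (offNbhd G F)

/-- `H_v = H \ N[v]`. -/
def delVert {V : Type*} (H : SimpleGraph V) (v : V) : SimpleGraph (offNbhd H {v}) :=
  delNbhd H {v}

/-- The independence polynomial `I(G, x) = Σ_i a_i x^i` of a finite graph,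
as a polynomial over `ℚ`. -/
noncomputable def indepPoly {W : Type*} (G : SimpleGraph W) [Fintype W] : Polynomial ℚ :=
  ∑ s ∈ Finset.univ.filter (fun s : Finset W => IsIndep G s),
    (Polynomial.X : Polynomial ℚ) ^ s.card

/-- `a_i(G)`: the number of independent sets of size `i`, indexed by `ℤ`
(so that it is `0` for `i < 0`). -/
noncomputable def numIndep {W : Type*} (G : SimpleGraph W) [Fintype W] (i : ℤ) : ℕ :=
  (Finset.univ.filter (fun s : Finset W => IsIndep G s ∧ (s.card : ℤ) = i)).card

/-- A finite graph is well-covered if every maximal independent set has size `α(G)`. -/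
def WellCovered {W : Type*} (G : SimpleGraph W) [Fintype W] : Prop :=
  ∀ s : Finset W, IsMaxIndep G s → s.card = indepNum G

/-- A finite graph is a `W₂` graph if it has at least two vertices and every pair of
disjoint independent sets is contained in a pair of disjoint maximum independent sets. -/
def IsW2 {W : Type*} (G : SimpleGraph W) [Fintype W] : Prop :=
  2 ≤ Fintype.card W ∧
    ∀ A B : Finset W, IsIndep G A → IsIndep G B → Disjoint A B →
      ∃ A' B' : Finset W, IsIndep G A' ∧ IsIndep G B' ∧ Disjoint A' B' ∧
        A ⊆ A' ∧ B ⊆ B' ∧ A'.card = indepNum G ∧ B'.card = indepNum G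

section helpers
variable {V : Type*} [Fintype V] [DecidableEq V] (H : SimpleGraph V) (v : V)

lemma tr_adj_inl_inl (x y : V) : (Tr H v).Adj (Sum.inl x) (Sum.inl y) ↔ H.Adj x y := by
  rw [Tr, SimpleGraph.fromRel_adj]
  constructor
  · rintro ⟨hne, h | h⟩
    · exact h
    · exact h.symm
  · intro h
    exact ⟨by simp [h.ne], Or.inl h⟩

lemma tr_adj_inl_c (x : V) : (Tr H v).Adj (Sum.inl x) (Sum.inr 2) ↔ H.Adj x v := by
  rw [Tr, SimpleGraph.fromRel_adj]
  simp

lemma mem_offNbhd (w : V) : w ∈ offNbhd H {v} ↔ w ≠ v ∧ ¬ H.Adj v w := by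
  simp [offNbhd]

lemma delVert_adj (w u : offNbhd H {v}) :
    (delVert H v).Adj w u ↔ H.Adj w.1 u.1 := Iff.rfl

noncomputable def liftF (s : Finset (offNbhd H {v})) : Finset (V ⊕ Fin 3) :=
  s.image (fun w => Sum.inl w.1)

noncomputable def pull (F : Finset (V ⊕ Fin 3)) : Finset (offNbhd H {v}) :=
  Finset.univ.filter (fun w : offNbhd H {v} => Sum.inl w.1 ∈ F)

lemma mem_liftF (s : Finset (offNbhd H {v})) (x : V ⊕ Fin 3) :
    x ∈ liftF H v s ↔ ∃ w ∈ s, Sum.inl w.1 = x := by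
  simp [liftF]

lemma mem_pull (F : Finset (V ⊕ Fin 3)) (w : offNbhd H {v}) :
    w ∈ pull H v F ↔ Sum.inl w.1 ∈ F := by
  simp [pull]

lemma liftF_card (s : Finset (offNbhd H {v})) : (liftF H v s).card = s.card :=
  Finset.card_image_of_injective _ (fun w u h => Subtype.ext (Sum.inl.inj h))

lemma inl_v_not_mem_liftF (s : Finset (offNbhd H {v})) : Sum.inl v ∉ liftF H v s := by
  rw [mem_liftF]
  rintro ⟨w, -, h⟩
  exact ((mem_offNbhd H v w.1).1 w.2).1 (Sum.inl.inj h)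

lemma inr_not_mem_liftF (s : Finset (offNbhd H {v})) (j : Fin 3) :
    Sum.inr j ∉ liftF H v s := by
  rw [mem_liftF]
  rintro ⟨w, -, h⟩
  exact Sum.inl_ne_inr h


set_option linter.unusedSectionVars false
set_option linter.unusedVariables false

lemma isIndep_subset {W : Type*} {G : SimpleGraph W} {s t : Finset W}
    (hsub : t ⊆ s) (hs : IsIndep G s) : IsIndep G t :=
  fun x hx y hy => hs x (hsub hx) y (hsub hy)

lemma indep_insertA (s : Finset (offNbhd H {v})) (hs : IsIndep (delVert H v) s) :
    IsIndep (Tr H v)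
      (insert (Sum.inr 2) (insert (Sum.inl v) (liftF H v s))) := by
  have hoff : ∀ w : offNbhd H {v}, ¬ H.Adj v w.1 := fun w => w.2.2 v rfl
  intro x hx y hy hadj
  simp only [Finset.mem_insert, mem_liftF] at hx hy
  rcases hx with (rfl | rfl | ⟨w, hw, rfl⟩) <;> rcases hy with (rfl | rfl | ⟨u, hu, rfl⟩)
  · exact (Tr H v).loopless.irrefl _ hadj
  · exact H.loopless.irrefl v ((tr_adj_inl_c H v v).1 hadj.symm)
  · exact hoff u (((tr_adj_inl_c H v u.1).1 hadj.symm).symm)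
  · exact H.loopless.irrefl v ((tr_adj_inl_c H v v).1 hadj)
  · exact (Tr H v).loopless.irrefl _ hadj
  · exact hoff u ((tr_adj_inl_inl H v v u.1).1 hadj)
  · exact hoff w (((tr_adj_inl_c H v w.1).1 hadj).symm)
  · exact hoff w (((tr_adj_inl_inl H v w.1 v).1 hadj).symm)
  · exact hs w hw u hu ((tr_adj_inl_inl H v w.1 u.1).1 hadj)

lemma indep_insertB (s : Finset (offNbhd H {v})) (hs : IsIndep (delVert H v) s) :
    IsIndep (Tr H v) (insert (Sum.inr 2) (liftF H v s)) := by
  refine isIndep_subset ?_ (indep_insertA H v s hs)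
  intro x hx
  simp only [Finset.mem_insert] at hx ⊢
  tauto

lemma inter_iff (F : Finset (V ⊕ Fin 3)) :
    F ∩ ({Sum.inr 0, Sum.inr 1, Sum.inr 2} : Finset (V ⊕ Fin 3)) = {Sum.inr 2} ↔
      Sum.inr 2 ∈ F ∧ Sum.inr 0 ∉ F ∧ Sum.inr 1 ∉ F := by
  constructor
  · intro h
    refine ⟨?_, ?_, ?_⟩
    · have : Sum.inr 2 ∈ F ∩ ({Sum.inr 0, Sum.inr 1, Sum.inr 2} : Finset (V ⊕ Fin 3)) := by
        rw [h]; simp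
      exact (Finset.mem_inter.1 this).1
    · intro h0
      have : Sum.inr 0 ∈ F ∩ ({Sum.inr 0, Sum.inr 1, Sum.inr 2} : Finset (V ⊕ Fin 3)) := by
        simp [h0]
      rw [h] at this
      simp at this
    · intro h1
      have : Sum.inr 1 ∈ F ∩ ({Sum.inr 0, Sum.inr 1, Sum.inr 2} : Finset (V ⊕ Fin 3)) := by
        simp [h1]
      rw [h] at this
      simp at this
  · rintro ⟨h2, h0, h1⟩
    ext x
    simp only [Finset.mem_inter, Finset.mem_insert, Finset.mem_singleton]
    constructor
    · rintro ⟨hxF, (rfl | rfl | rfl)⟩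
      · exact absurd hxF h0
      · exact absurd hxF h1
      · rfl
    · rintro rfl
      exact ⟨h2, Or.inr (Or.inr rfl)⟩

lemma struct (F : Finset (V ⊕ Fin 3)) (hind : IsIndep (Tr H v) F)
    (hc : Sum.inr 2 ∈ F) (ha : Sum.inr 0 ∉ F) (hb : Sum.inr 1 ∉ F) :
    ∀ x ∈ F, x = Sum.inr 2 ∨ x = Sum.inl v ∨ ∃ w ∈ offNbhd H {v}, x = Sum.inl w := by
  intro x hx
  match x with
  | Sum.inl w =>
    by_cases hwv : w = v
    · exact Or.inr (Or.inl (by rw [hwv]))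
    · refine Or.inr (Or.inr ⟨w, ?_, rfl⟩)
      rw [mem_offNbhd]
      refine ⟨hwv, fun hadj => ?_⟩
      exact hind _ hx _ hc ((tr_adj_inl_c H v w).2 hadj.symm)
  | Sum.inr j =>
    fin_cases j
    · exact absurd hx ha
    · exact absurd hx hb
    · exact Or.inl rfl

lemma decompA (F : Finset (V ⊕ Fin 3)) (hind : IsIndep (Tr H v) F)
    (hc : Sum.inr 2 ∈ F) (ha : Sum.inr 0 ∉ F) (hb : Sum.inr 1 ∉ F)
    (hvF : Sum.inl v ∈ F) :
    F = insert (Sum.inr 2) (insert (Sum.inl v) (liftF H v (pull H v F))) := by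
  ext x
  simp only [Finset.mem_insert, mem_liftF, mem_pull]
  constructor
  · intro hx
    rcases struct H v F hind hc ha hb x hx with (rfl | rfl | ⟨w, hw, rfl⟩)
    · exact Or.inl rfl
    · exact Or.inr (Or.inl rfl)
    · exact Or.inr (Or.inr ⟨⟨w, hw⟩, hx, rfl⟩)
  · rintro (rfl | rfl | ⟨w, hw, rfl⟩)
    · exact hc
    · exact hvF
    · exact hw

lemma decompB (F : Finset (V ⊕ Fin 3)) (hind : IsIndep (Tr H v) F)
    (hc : Sum.inr 2 ∈ F) (ha : Sum.inr 0 ∉ F) (hb : Sum.inr 1 ∉ F)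
    (hvF : Sum.inl v ∉ F) :
    F = insert (Sum.inr 2) (liftF H v (pull H v F)) := by
  ext x
  simp only [Finset.mem_insert, mem_liftF, mem_pull]
  constructor
  · intro hx
    rcases struct H v F hind hc ha hb x hx with (rfl | rfl | ⟨w, hw, rfl⟩)
    · exact Or.inl rfl
    · exact absurd hx hvF
    · exact Or.inr ⟨⟨w, hw⟩, hx, rfl⟩
  · rintro (rfl | ⟨w, hw, rfl⟩)
    · exact hc
    · exact hw

lemma pull_insertA (s : Finset (offNbhd H {v})) :
    pull H v (insert (Sum.inr 2) (insert (Sum.inl v) (liftF H v s))) = s := by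
  ext w
  simp only [mem_pull, Finset.mem_insert, mem_liftF]
  constructor
  · rintro (h | h | ⟨u, hu, h⟩)
    · exact absurd h (Sum.inl_ne_inr)
    · exact absurd ((mem_offNbhd H v w.1).1 w.2).1 (fun hne => hne (Sum.inl.inj h))
    · rwa [show u = w from Subtype.ext (Sum.inl.inj h)] at hu
  · intro hw
    exact Or.inr (Or.inr ⟨w, hw, rfl⟩)

lemma pull_insertB (s : Finset (offNbhd H {v})) :
    pull H v (insert (Sum.inr 2) (liftF H v s)) = s := by
  ext w
  simp only [mem_pull, Finset.mem_insert, mem_liftF]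
  constructor
  · rintro (h | ⟨u, hu, h⟩)
    · exact absurd h (Sum.inl_ne_inr)
    · rwa [show u = w from Subtype.ext (Sum.inl.inj h)] at hu
  · intro hw
    exact Or.inr ⟨w, hw, rfl⟩

lemma cardA_aux (s : Finset (offNbhd H {v})) :
    (insert (Sum.inr 2) (insert (Sum.inl v) (liftF H v s))).card = s.card + 2 := by
  rw [Finset.card_insert_of_notMem, Finset.card_insert_of_notMem, liftF_card]
  · exact inl_v_not_mem_liftF H v s
  · simp only [Finset.mem_insert]
    push_neg
    exact ⟨by simp, inr_not_mem_liftF H v s 2⟩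

lemma cardB_aux (s : Finset (offNbhd H {v})) :
    (insert (Sum.inr 2) (liftF H v s)).card = s.card + 1 := by
  rw [Finset.card_insert_of_notMem (inr_not_mem_liftF H v s 2), liftF_card]

end helpers

section counting
variable {V : Type*} [Fintype V] [DecidableEq V] (H : SimpleGraph V) (v : V)
set_option linter.unusedSectionVars false

lemma cardA (i : ℤ) :
    (Finset.univ.filter (fun F : Finset (V ⊕ Fin 3) =>
        (IsIndep (Tr H v) F ∧ (F.card : ℤ) = i ∧
          F ∩ ({Sum.inr 0, Sum.inr 1, Sum.inr 2} : Finset (V ⊕ Fin 3)) = {Sum.inr 2}) ∧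
          Sum.inl v ∈ F)).card = numIndep (delVert H v) (i - 2) := by
  rw [numIndep]
  refine Finset.card_nbij' (pull H v)
    (fun s => insert (Sum.inr 2) (insert (Sum.inl v) (liftF H v s))) ?_ ?_ ?_ ?_
  · intro F hF
    rw [Finset.mem_coe, Finset.mem_filter] at hF
    obtain ⟨-, ⟨hind, hcard, hinter⟩, hvF⟩ := hF
    obtain ⟨hc, ha, hb⟩ := (inter_iff F).1 hinter
    rw [Finset.mem_coe, Finset.mem_filter]
    refine ⟨Finset.mem_univ _, ?_, ?_⟩
    · intro w hw u hu hadj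
      rw [mem_pull] at hw hu
      exact hind _ hw _ hu ((tr_adj_inl_inl H v w.1 u.1).2 hadj)
    · have hd := decompA H v F hind hc ha hb hvF
      have : F.card = (pull H v F).card + 2 := by nth_rewrite 1 [hd]; exact cardA_aux H v _
      rw [this] at hcard
      push_cast at hcard ⊢
      omega
  · intro s hs
    rw [Finset.mem_coe, Finset.mem_filter] at hs
    obtain ⟨-, hind, hcard⟩ := hs
    rw [Finset.mem_coe, Finset.mem_filter]
    refine ⟨Finset.mem_univ _, ⟨indep_insertA H v s hind, ?_, ?_⟩, ?_⟩
    · rw [cardA_aux H v s]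
      push_cast
      omega
    · rw [inter_iff]
      refine ⟨Finset.mem_insert_self _ _, ?_, ?_⟩ <;>
        simp [Finset.mem_insert, inr_not_mem_liftF, Fin.ext_iff]
    · exact Finset.mem_insert_of_mem (Finset.mem_insert_self _ _)
  · intro F hF
    rw [Finset.mem_coe, Finset.mem_filter] at hF
    obtain ⟨-, ⟨hind, hcard, hinter⟩, hvF⟩ := hF
    obtain ⟨hc, ha, hb⟩ := (inter_iff F).1 hinter
    exact (decompA H v F hind hc ha hb hvF).symm
  · intro s hs
    exact pull_insertA H v s

lemma cardB (i : ℤ) :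
    (Finset.univ.filter (fun F : Finset (V ⊕ Fin 3) =>
        (IsIndep (Tr H v) F ∧ (F.card : ℤ) = i ∧
          F ∩ ({Sum.inr 0, Sum.inr 1, Sum.inr 2} : Finset (V ⊕ Fin 3)) = {Sum.inr 2}) ∧
          Sum.inl v ∉ F)).card = numIndep (delVert H v) (i - 1) := by
  rw [numIndep]
  refine Finset.card_nbij' (pull H v)
    (fun s => insert (Sum.inr 2) (liftF H v s)) ?_ ?_ ?_ ?_
  · intro F hF
    rw [Finset.mem_coe, Finset.mem_filter] at hF
    obtain ⟨-, ⟨hind, hcard, hinter⟩, hvF⟩ := hF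
    obtain ⟨hc, ha, hb⟩ := (inter_iff F).1 hinter
    rw [Finset.mem_coe, Finset.mem_filter]
    refine ⟨Finset.mem_univ _, ?_, ?_⟩
    · intro w hw u hu hadj
      rw [mem_pull] at hw hu
      exact hind _ hw _ hu ((tr_adj_inl_inl H v w.1 u.1).2 hadj)
    · have hd := decompB H v F hind hc ha hb hvF
      have : F.card = (pull H v F).card + 1 := by nth_rewrite 1 [hd]; exact cardB_aux H v _
      rw [this] at hcard
      push_cast at hcard ⊢
      omega
  · intro s hs
    rw [Finset.mem_coe, Finset.mem_filter] at hs
    obtain ⟨-, hind, hcard⟩ := hs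
    rw [Finset.mem_coe, Finset.mem_filter]
    refine ⟨Finset.mem_univ _, ⟨indep_insertB H v s hind, ?_, ?_⟩, ?_⟩
    · rw [cardB_aux H v s]
      push_cast
      omega
    · rw [inter_iff]
      refine ⟨Finset.mem_insert_self _ _, ?_, ?_⟩ <;>
        simp [Finset.mem_insert, inr_not_mem_liftF, Fin.ext_iff]
    · simp [Finset.mem_insert, inl_v_not_mem_liftF]
  · intro F hF
    rw [Finset.mem_coe, Finset.mem_filter] at hF
    obtain ⟨-, ⟨hind, hcard, hinter⟩, hvF⟩ := hF
    obtain ⟨hc, ha, hb⟩ := (inter_iff F).1 hinter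
    exact (decompB H v F hind hc ha hb hvF).symm
  · intro s hs
    exact pull_insertB H v s

end counting

theorem count_indep_Tr_with_c {V : Type*} [Fintype V] [DecidableEq V]
    (H : SimpleGraph V) (v : V) (hv : ∃ u, H.Adj v u) (i : ℤ) (hi : 0 ≤ i) :
    (Finset.univ.filter (fun F : Finset (V ⊕ Fin 3) =>
        IsIndep (Tr H v) F ∧ (F.card : ℤ) = i ∧
          F ∩ ({Sum.inr 0, Sum.inr 1, Sum.inr 2} : Finset (V ⊕ Fin 3)) = {Sum.inr 2})).card =
      numIndep (delVert H v) (i - 1) + numIndep (delVert H v) (i - 2) ∧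
    Nonempty
      ({F : Finset (V ⊕ Fin 3) // IsIndep (Tr H v) F ∧ (F.card : ℤ) = i ∧
          F ∩ ({Sum.inr 0, Sum.inr 1, Sum.inr 2} : Finset (V ⊕ Fin 3)) = {Sum.inr 2} ∧
          Sum.inl v ∈ F} ≃
        {s : Finset (offNbhd H {v}) // IsIndep (delVert H v) s ∧ (s.card : ℤ) = i - 2}) ∧
    Nonempty
      ({F : Finset (V ⊕ Fin 3) // IsIndep (Tr H v) F ∧ (F.card : ℤ) = i ∧
          F ∩ ({Sum.inr 0, Sum.inr 1, Sum.inr 2} : Finset (V ⊕ Fin 3)) = {Sum.inr 2} ∧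
          Sum.inl v ∉ F} ≃
        {s : Finset (offNbhd H {v}) // IsIndep (delVert H v) s ∧ (s.card : ℤ) = i - 1}) := by
  refine ⟨?_, ?_, ?_⟩
  · have key := Finset.card_filter_add_card_filter_not
      (s := Finset.univ.filter (fun F : Finset (V ⊕ Fin 3) =>
        IsIndep (Tr H v) F ∧ (F.card : ℤ) = i ∧
          F ∩ ({Sum.inr 0, Sum.inr 1, Sum.inr 2} : Finset (V ⊕ Fin 3)) = {Sum.inr 2}))
      (fun F => Sum.inl v ∈ F)
    rw [Finset.filter_filter, Finset.filter_filter] at key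
    rw [cardA H v i, cardB H v i] at key
    omega
  · refine Fintype.card_eq.mp ?_
    rw [Fintype.card_subtype, Fintype.card_subtype]
    have h1 : (Finset.univ.filter (fun F : Finset (V ⊕ Fin 3) =>
        IsIndep (Tr H v) F ∧ (F.card : ℤ) = i ∧
          F ∩ ({Sum.inr 0, Sum.inr 1, Sum.inr 2} : Finset (V ⊕ Fin 3)) = {Sum.inr 2} ∧
          Sum.inl v ∈ F)) =
        (Finset.univ.filter (fun F : Finset (V ⊕ Fin 3) =>
        (IsIndep (Tr H v) F ∧ (F.card : ℤ) = i ∧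
          F ∩ ({Sum.inr 0, Sum.inr 1, Sum.inr 2} : Finset (V ⊕ Fin 3)) = {Sum.inr 2}) ∧
          Sum.inl v ∈ F)) := by
      apply Finset.filter_congr
      intro F _
      tauto
    rw [h1, cardA H v i, numIndep]
  · refine Fintype.card_eq.mp ?_
    rw [Fintype.card_subtype, Fintype.card_subtype]
    have h1 : (Finset.univ.filter (fun F : Finset (V ⊕ Fin 3) =>
        IsIndep (Tr H v) F ∧ (F.card : ℤ) = i ∧
          F ∩ ({Sum.inr 0, Sum.inr 1, Sum.inr 2} : Finset (V ⊕ Fin 3)) = {Sum.inr 2} ∧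
          Sum.inl v ∉ F)) =
        (Finset.univ.filter (fun F : Finset (V ⊕ Fin 3) =>
        (IsIndep (Tr H v) F ∧ (F.card : ℤ) = i ∧
          F ∩ ({Sum.inr 0, Sum.inr 1, Sum.inr 2} : Finset (V ⊕ Fin 3)) = {Sum.inr 2}) ∧
          Sum.inl v ∉ F)) := by
      apply Finset.filter_congr
      intro F _
      tauto
    rw [h1, cardB H v i, numIndep]
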